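/- For LP-relaxation-feasible x of an MWTM instance, summing the task constraints gives Σ_{i,j} x_{i,j} = m, and summing the path constraints over the set Λ_e of effective leaves gives Σ_{k ∈ Λ_e} Σ_{i ∈ Π_k} Σ_j x_{i,j} ≤ |Λ_e|; since the left sum dominates Σ_{i,j} x_{i,j} (every positive-x node lies on a path to some effective leaf), m ≤ |Λ_e|. -/
import Mathlib


attribute [local instance] Classical.propDecidable

/-- A rooted tree on a finite vertex type `V`, given by a parent function. -/
structure OrgTree (V : Type) [Fintype V] [DecidableEq V] where
  root : V
  parent : V → V
  parent_root : parent root = root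
  reach : ∀ v : V, ∃ k : ℕ, parent^[k] v = root

variable {V : Type} [Fintype V] [DecidableEq V]

/-- `T.Anc u v` : `u` is a (weak) ancestor of `v`, i.e. `u` lies on the
path from the root to `v`. -/
def OrgTree.Anc (T : OrgTree V) (u v : V) : Prop :=
  ∃ k : ℕ, T.parent^[k] v = u

/-- A leaf is a node with no children. -/
def OrgTree.IsLeaf (T : OrgTree V) (v : V) : Prop :=
  ∀ u : V, T.parent u = v → u = v

/-- An antichain: no element is a (weak) ancestor of another distinct element. -/
def OrgTree.IsAntichain (T : OrgTree V) (S : Set V) : Prop :=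
  ∀ u ∈ S, ∀ v ∈ S, u ≠ v → ¬ T.Anc u v

/-- Feasibility for the LP relaxation of the MWTM ILP:
nonnegativity, per-node sums at most 1, per-task sums equal to 1, and
for every leaf the total assignment along the root-to-leaf path at most 1. -/
def LPFeasible (T : OrgTree V) (m : ℕ) (x : V → Fin m → ℝ) : Prop :=
  (∀ i j, 0 ≤ x i j) ∧
  (∀ i : V, ∑ j : Fin m, x i j ≤ 1) ∧
  (∀ j : Fin m, ∑ i : V, x i j = 1) ∧
  (∀ k : V, T.IsLeaf k →
    ∑ i ∈ Finset.univ.filter (fun i => T.Anc i k), ∑ j : Fin m, x i j ≤ 1)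

/-- An effective leaf w.r.t. `x`: a node with a positive assignment none of
whose strict descendants has a positive assignment. -/
def EffLeaf (T : OrgTree V) (m : ℕ) (x : V → Fin m → ℝ) (i : V) : Prop :=
  (∃ j : Fin m, 0 < x i j) ∧
    ∀ v : V, T.Anc i v → v ≠ i → ∀ j : Fin m, x v j = 0

noncomputable def tdepth (T : OrgTree V) (v : V) : ℕ := Nat.find (T.reach v)

lemma tdepth_spec (T : OrgTree V) (v : V) : T.parent^[tdepth T v] v = T.root :=
  Nat.find_spec (T.reach v)

lemma anc_refl (T : OrgTree V) (v : V) : T.Anc v v := ⟨0, rfl⟩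

lemma anc_trans (T : OrgTree V) {a b c : V} (h1 : T.Anc a b) (h2 : T.Anc b c) :
    T.Anc a c := by
  obtain ⟨k1, h1⟩ := h1; obtain ⟨k2, h2⟩ := h2
  exact ⟨k1 + k2, by rw [Function.iterate_add_apply, h2, h1]⟩

lemma anc_depth_lt (T : OrgTree V) {v w : V} (h : T.Anc v w) (hne : w ≠ v) :
    tdepth T v < tdepth T w := by
  obtain ⟨k, hk⟩ := h
  have hk1 : 1 ≤ k := by
    rcases Nat.eq_zero_or_pos k with h0 | h0
    · exact absurd (by simpa [h0] using hk) hne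
    · exact h0
  by_cases hle : k ≤ tdepth T w
  · have hwroot : T.parent^[tdepth T w - k] v = T.root := by
      rw [← hk, ← Function.iterate_add_apply]
      rw [Nat.sub_add_cancel hle]
      exact tdepth_spec T w
    have h1 : tdepth T v ≤ tdepth T w - k := Nat.find_le hwroot
    have h2 : 1 ≤ tdepth T w := le_trans hk1 hle
    omega
  · push_neg at hle
    have hvroot : v = T.root := by
      rw [← hk]
      have : k = (k - tdepth T w) + tdepth T w := by omega
      rw [this, Function.iterate_add_apply, tdepth_spec T w]
      exact Function.iterate_fixed T.parent_root _
    have h1 : tdepth T v = 0 := by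
      have : T.parent^[0] v = T.root := by simpa using hvroot
      exact Nat.le_zero.mp (Nat.find_le this)
    have h2 : tdepth T w ≠ 0 := by
      intro h0
      have hw : w = T.root := by
        have hs := tdepth_spec T w
        rwa [h0, Function.iterate_zero] at hs
      exact hne (hw.trans hvroot.symm)
    omega

lemma exists_leaf_below (T : OrgTree V) (k : V) :
    ∃ ℓ : V, T.IsLeaf ℓ ∧ T.Anc k ℓ := by
  classical
  set D := Finset.univ.filter (fun v => T.Anc k v) with hD
  have hne : D.Nonempty := ⟨k, by simp [hD, anc_refl]⟩
  obtain ⟨ℓ, hℓD, hmax⟩ := D.exists_max_image (tdepth T) hne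
  have hℓanc : T.Anc k ℓ := by simpa [hD] using hℓD
  refine ⟨ℓ, ?_, hℓanc⟩
  intro u hu
  by_contra hne'
  have hancu : T.Anc ℓ u := ⟨1, by simpa using hu⟩
  have huD : u ∈ D := by simp [hD]; exact anc_trans T hℓanc hancu
  exact absurd (hmax u huD) (not_le.mpr (anc_depth_lt T hancu hne'))

/-- For an LP-feasible `x`: summing the task constraints gives
`Σ_{i,j} x_{i,j} = m`; summing the path constraints over the effective leaves
`Λ_e` gives `Σ_{k ∈ Λ_e} Σ_{i ∈ Π_k} Σ_j x_{i,j} ≤ |Λ_e|`; and since the left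
sum dominates the total, `m ≤ |Λ_e|`. -/
theorem lp_counting (T : OrgTree V) (m : ℕ) (x : V → Fin m → ℝ)
    (hx : LPFeasible T m x) :
    (∑ i : V, ∑ j : Fin m, x i j = (m : ℝ)) ∧
      (∑ k ∈ Finset.univ.filter (fun k => EffLeaf T m x k),
          ∑ i ∈ Finset.univ.filter (fun i => T.Anc i k), ∑ j : Fin m, x i j ≤
        ((Finset.univ.filter (fun k => EffLeaf T m x k)).card : ℝ)) ∧
      m ≤ (Finset.univ.filter (fun k => EffLeaf T m x k)).card := by
  classical
  obtain ⟨hnn, hnode, htask, hpath⟩ := hx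
  set s : V → ℝ := fun i => ∑ j : Fin m, x i j with hs
  have hsnn : ∀ i, 0 ≤ s i := fun i => Finset.sum_nonneg fun j _ => hnn i j
  set Λe := Finset.univ.filter (fun k => EffLeaf T m x k) with hΛ
  set Pi : V → Finset V := fun k => Finset.univ.filter (fun i => T.Anc i k) with hPi
  -- Part 1
  have h1 : ∑ i : V, ∑ j : Fin m, x i j = (m : ℝ) := by
    rw [Finset.sum_comm]
    simp [htask]
  -- path sum bound for any node (not only leaves)
  have hpath' : ∀ k : V, ∑ i ∈ Pi k, s i ≤ 1 := by
    intro k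
    obtain ⟨ℓ, hℓleaf, hℓanc⟩ := exists_leaf_below T k
    refine le_trans (Finset.sum_le_sum_of_subset_of_nonneg ?_ ?_) (hpath ℓ hℓleaf)
    · intro i hi
      simp only [hPi, Finset.mem_filter, Finset.mem_univ, true_and] at hi ⊢
      exact anc_trans T hi hℓanc
    · intro i _ _; exact hsnn i
  -- Part 2
  have h2 : ∑ k ∈ Λe, ∑ i ∈ Pi k, s i ≤ (Λe.card : ℝ) := by
    calc ∑ k ∈ Λe, ∑ i ∈ Pi k, s i ≤ ∑ _k ∈ Λe, (1 : ℝ) :=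
          Finset.sum_le_sum fun k _ => hpath' k
      _ = (Λe.card : ℝ) := by simp
  -- every node with positive assignment has an effective leaf below it
  have heff : ∀ i : V, 0 < s i → ∃ k, EffLeaf T m x k ∧ T.Anc i k := by
    intro i hi
    have hij : ∃ j, 0 < x i j := by
      by_contra hcon
      push_neg at hcon
      have : s i = 0 := Finset.sum_eq_zero fun j _ => le_antisymm (hcon j) (hnn i j)
      exact absurd this (ne_of_gt hi)
    set D := Finset.univ.filter (fun v => T.Anc i v ∧ ∃ j, 0 < x v j) with hD
    have hne : D.Nonempty := ⟨i, by simp [hD, anc_refl, hij]⟩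
    obtain ⟨k, hkD, hmax⟩ := D.exists_max_image (tdepth T) hne
    simp only [hD, Finset.mem_filter, Finset.mem_univ, true_and] at hkD
    refine ⟨k, ⟨hkD.2, ?_⟩, hkD.1⟩
    intro v hv hvne j
    by_contra hxv
    have hxvpos : 0 < x v j := lt_of_le_of_ne (hnn v j) (Ne.symm hxv)
    have hvD : v ∈ D := by
      simp only [hD, Finset.mem_filter, Finset.mem_univ, true_and]
      exact ⟨anc_trans T hkD.1 hv, j, hxvpos⟩
    exact absurd (hmax v hvD) (not_le.mpr (anc_depth_lt T hv hvne))
  -- choose such an effective leaf for each node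
  have hGex : ∀ i : V, ∃ k : V, 0 < s i → EffLeaf T m x k ∧ T.Anc i k := by
    intro i
    by_cases h : 0 < s i
    · obtain ⟨k, hk⟩ := heff i h; exact ⟨k, fun _ => hk⟩
    · exact ⟨T.root, fun h' => absurd h' h⟩
  choose G hG using hGex
  -- key inequality
  have hkey : ∑ i : V, s i ≤ ∑ k ∈ Λe, ∑ i ∈ Pi k, s i := by
    have hsig : ∑ k ∈ Λe, ∑ i ∈ Pi k, s i
        = ∑ p ∈ Λe.sigma (fun k => Pi k), s p.2 := by
      rw [Finset.sum_sigma]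
    rw [hsig, ← Finset.sum_filter_ne_zero (f := s) Finset.univ]
    set A := Finset.univ.filter (fun i => s i ≠ 0) with hA
    have hinj : Set.InjOn (fun i => (⟨G i, i⟩ : Σ _ : V, V)) A := by
      intro a _ b _ hab
      exact (Sigma.mk.inj_iff.mp hab).2.eq
    have himg : ∑ i ∈ A, s i = ∑ p ∈ A.image (fun i => (⟨G i, i⟩ : Σ _ : V, V)), s p.2 :=
      (Finset.sum_image (f := fun p => s p.2) fun a ha b hb hab => hinj ha hb hab).symm
    rw [himg]
    refine Finset.sum_le_sum_of_subset_of_nonneg ?_ (fun p _ _ => hsnn p.2)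
    intro p hp
    simp only [Finset.mem_image] at hp
    obtain ⟨i, hi, rfl⟩ := hp
    simp only [hA, Finset.mem_filter, Finset.mem_univ, true_and] at hi
    have hipos : 0 < s i := lt_of_le_of_ne (hsnn i) (Ne.symm hi)
    obtain ⟨hGeff, hGanc⟩ := hG i hipos
    rw [Finset.mem_sigma]
    constructor
    · simp [hΛ, hGeff]
    · simp [hPi, hGanc]
  -- Part 3
  have h3 : (m : ℝ) ≤ (Λe.card : ℝ) := by
    calc (m : ℝ) = ∑ i : V, s i := h1.symm
      _ ≤ ∑ k ∈ Λe, ∑ i ∈ Pi k, s i := hkey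
      _ ≤ (Λe.card : ℝ) := h2
  exact ⟨h1, h2, Nat.cast_le.mp h3⟩
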